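/- Let D₀ be an N×N real matrix that is invertible, has nonnegative off-diagonal entries, nonpositive diagonal entries, and nonpositive row sums, with all eigenvalues having strictly negative real part, and let D₁ = βκᵀ with κᵀ1 = 1 and D := D₀ + D₁ having zero row sums (D1 = 0). Let π be a probability row vector with πᵀD = 0, and set α := −κᵀD₀⁻¹1. Then α·πᵀD₁ = κᵀ. -/
import Mathlib


open Matrix

/-- Under the renewal condition, with `α = −κᵀD₀⁻¹1` the mean inter-arrival time and `π`
the stationary distribution of `D = D₀ + D₁`, we have `α·πᵀD₁ = κᵀ`. -/
theorem mean_interarrival_identity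
    {N : ℕ} (D₀ : Matrix (Fin N) (Fin N) ℝ)
    (hD₀unit : IsUnit D₀)
    (hoff : ∀ i j, i ≠ j → 0 ≤ D₀ i j)
    (hdiag : ∀ i, D₀ i i ≤ 0)
    (hrow : ∀ i, ∑ j, D₀ i j ≤ 0)
    (hspec : ∀ μ ∈ spectrum ℂ (D₀.map Complex.ofReal), μ.re < 0)
    (β κv : Fin N → ℝ) (hκ1 : ∑ j, κv j = 1)
    (D₁ : Matrix (Fin N) (Fin N) ℝ) (hD₁ : D₁ = vecMulVec β κv)
    (hDrow : ∀ i, ∑ j, (D₀ + D₁) i j = 0)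
    (π : Fin N → ℝ) (hπ0 : ∀ i, 0 ≤ π i) (hπ1 : ∑ i, π i = 1)
    (hπD : π ᵥ* (D₀ + D₁) = 0)
    (hπβ : 0 < π ⬝ᵥ β)
    (α : ℝ) (hα : α = -(κv ⬝ᵥ (D₀⁻¹ *ᵥ fun _ => 1))) :
    α • (π ᵥ* D₁) = κv := by
  have hdet : IsUnit D₀.det := (Matrix.isUnit_iff_isUnit_det D₀).mp hD₀unit
  set c : ℝ := π ⬝ᵥ β with hc
  -- π ᵥ* D₁ = c • κv
  have h1 : π ᵥ* D₁ = c • κv := by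
    funext j
    simp only [hD₁, vecMul, dotProduct, vecMulVec, Matrix.of_apply, Pi.smul_apply,
      smul_eq_mul, hc]
    rw [Finset.sum_mul]
    exact Finset.sum_congr rfl fun i _ => by ring
  -- π ᵥ* D₀ = -(c • κv)
  have h2 : π ᵥ* D₀ = -(c • κv) := by
    have h := hπD
    rw [Matrix.vecMul_add, h1] at h
    exact eq_neg_of_add_eq_zero_left h
  -- π = (-c) • (κv ᵥ* D₀⁻¹)
  have h3 : π = (-c) • (κv ᵥ* D₀⁻¹) := by
    have := congrArg (fun v => v ᵥ* D₀⁻¹) h2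
    simpa [Matrix.vecMul_vecMul, Matrix.mul_nonsing_inv D₀ hdet, Matrix.neg_vecMul,
      Matrix.smul_vecMul, neg_smul] using this
  -- c * α = 1
  have h4 : c * α = 1 := by
    have hπ1' : π ⬝ᵥ (fun _ => (1 : ℝ)) = 1 := by
      simpa [dotProduct] using hπ1
    rw [h3] at hπ1'
    rw [hα]
    have : (κv ᵥ* D₀⁻¹) ⬝ᵥ (fun _ => (1 : ℝ)) = κv ⬝ᵥ (D₀⁻¹ *ᵥ fun _ => 1) :=
      (Matrix.dotProduct_mulVec κv D₀⁻¹ _).symm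
    rw [smul_dotProduct, this, smul_eq_mul] at hπ1'
    linarith
  rw [h1, smul_smul, mul_comm, h4, one_smul]
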